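/- Let v̄ > 0 and let F : [0, v̄] → ℝ be continuous and strictly increasing with F(0) = 0 (so F(v) > 0 for v > 0). Fix integers n ≥ 2 and 1 ≤ k ≤ n − 1. Define φ(v) := v − ∫₀^v [ Σ_{j=0}^{k−1} C(n−1, j) · (F(x)/F(v))^{n−1−j} · (1 − F(x)/F(v))^j ] dx for v ∈ (0, v̄]. Then φ is continuous and strictly increasing on (0, v̄], and φ(v) → 0 as v → 0⁺. -/

import Mathlib

open Set Filter

private def myS (m k : ℕ) (t : ℝ) : ℝ :=
  ∑ j ∈ Finset.range k, (m.choose j : ℝ) * t ^ (m - j) * (1 - t) ^ j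

private lemma myS_continuous (m k : ℕ) : Continuous (myS m k) := by
  unfold myS
  exact continuous_finset_sum _ fun j _ => by fun_prop

private lemma myS_full (m : ℕ) (t : ℝ) : myS m (m + 1) t = 1 := by
  have h : myS m (m + 1) t = ((1 - t) + t) ^ m := by
    rw [add_pow, myS]
    exact Finset.sum_congr rfl fun j hj => by ring
  rw [h, sub_add_cancel, one_pow]

private lemma myS_nonneg (m k : ℕ) {t : ℝ} (h0 : 0 ≤ t) (h1 : t ≤ 1) : 0 ≤ myS m k t := by
  apply Finset.sum_nonneg
  intro j hj
  have : 0 ≤ 1 - t := by linarith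
  positivity

private lemma myS_add_le_one {m k : ℕ} (hk : k ≤ m) {t : ℝ} (h0 : 0 ≤ t) (h1 : t ≤ 1) :
    myS m k t + (1 - t) ^ m ≤ 1 := by
  have h1t : 0 ≤ 1 - t := by linarith
  have h2 : myS m k t ≤ myS m m t := by
    apply Finset.sum_le_sum_of_subset_of_nonneg (Finset.range_subset_range.2 hk)
    intro j _ _
    positivity
  have h3 : myS m m t + (1 - t) ^ m = myS m (m + 1) t := by
    rw [myS, myS, Finset.sum_range_succ, Nat.choose_self, Nat.sub_self]
    push_cast; ring
  have h4 := myS_full m t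
  linarith

private lemma myS_le_one {m k : ℕ} (hk : k ≤ m) {t : ℝ} (h0 : 0 ≤ t) (h1 : t ≤ 1) :
    myS m k t ≤ 1 := by
  have := myS_add_le_one hk h0 h1
  have h1' : (0:ℝ) ≤ 1 - t := by linarith
  have h1t : (0:ℝ) ≤ (1 - t) ^ m := by positivity
  linarith

private lemma myS_lt_one {m k : ℕ} (hk : k ≤ m) {t : ℝ} (h0 : 0 ≤ t) (h1 : t < 1) :
    myS m k t < 1 := by
  have := myS_add_le_one hk h0 h1.le
  have h1' : (0:ℝ) < 1 - t := by linarith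
  have h1t : (0:ℝ) < (1 - t) ^ m := by positivity
  linarith

private lemma myS_hasDerivAt (m k : ℕ) (hkm : k ≤ m) (t : ℝ) :
    HasDerivAt (myS m k)
      ((m.choose k : ℝ) * k * t ^ (m - k) * (1 - t) ^ (k - 1)) t := by
  set b : ℕ → ℝ := fun j => (m.choose j : ℝ) * j * t ^ (m - j) * (1 - t) ^ (j - 1) with hb
  have hbk : (m.choose k : ℝ) * k * t ^ (m - k) * (1 - t) ^ (k - 1) = b k - b 0 := by
    simp [hb]
  rw [hbk, ← Finset.sum_range_sub b k]
  apply HasDerivAt.fun_sum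
  intro j hj
  have hjm : j < m := lt_of_lt_of_le (Finset.mem_range.1 hj) hkm
  have h1 : HasDerivAt (fun t : ℝ => t ^ (m - j)) (↑(m - j) * t ^ (m - j - 1)) t :=
    hasDerivAt_pow (m - j) t
  have hin : HasDerivAt (fun t : ℝ => 1 - t) (-1) t := by
    simpa using (hasDerivAt_id t).const_sub 1
  have h2 : HasDerivAt (fun t : ℝ => (1 - t) ^ j) (↑j * (1 - t) ^ (j - 1) * (-1)) t :=
    (hasDerivAt_pow j (1 - t)).comp t hin
  have h3 := (h1.mul h2).const_mul (m.choose j : ℝ)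
  convert h3 using 1
  · rfl
  · funext y; simp only [Pi.mul_apply]; ring
  · have hcast : (m.choose (j + 1) : ℝ) * (j + 1) = (m.choose j : ℝ) * ((m - j : ℕ) : ℝ) := by
      exact_mod_cast congrArg (Nat.cast (R := ℝ)) (Nat.choose_succ_right_eq m j)
    have e1 : m - j - 1 = m - (j + 1) := Nat.sub_sub m j 1
    simp only [hb, Nat.add_sub_cancel, ← e1]
    push_cast
    push_cast at hcast
    linear_combination (t ^ (m - j - 1) * (1 - t) ^ j) * hcast

private lemma myS_monotoneOn (m k : ℕ) (hkm : k ≤ m) : MonotoneOn (myS m k) (Icc (0:ℝ) 1) := by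
  apply monotoneOn_of_deriv_nonneg (convex_Icc 0 1) (myS_continuous m k).continuousOn
  · intro x _
    exact (myS_hasDerivAt m k hkm x).differentiableAt.differentiableWithinAt
  · intro x hx
    rw [interior_Icc] at hx
    rw [(myS_hasDerivAt m k hkm x).deriv]
    have h0 : 0 ≤ x := hx.1.le
    have h1 : 0 ≤ 1 - x := by linarith [hx.2]
    positivity

/-- **Continuity and strict monotonicity of the expected payment of the highest type**
(Lemma 2 of the paper). With `F` continuous and strictly increasing on `[0, v̄]`,
`F 0 = 0`, the function
`φ v = v - ∫₀^v ∑_{j=0}^{k-1} C(n-1,j) (F x / F v)^{n-1-j} (1 - F x / F v)^j dx`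
is continuous and strictly increasing on `(0, v̄]` and tends to `0` as `v → 0⁺`. -/
theorem tAE_continuous_strictMono
    (vbar : ℝ) (hvbar : 0 < vbar)
    (F : ℝ → ℝ)
    (hFcont : ContinuousOn F (Icc 0 vbar))
    (hFmono : StrictMonoOn F (Icc 0 vbar))
    (hF0 : F 0 = 0)
    (n k : ℕ) (hn : 2 ≤ n) (hk1 : 1 ≤ k) (hkn : k ≤ n - 1)
    (φ : ℝ → ℝ)
    (hφ : ∀ v, φ v = v - ∫ x in (0 : ℝ)..v,
      ∑ j ∈ Finset.range k,
        ((n - 1).choose j : ℝ) * (F x / F v) ^ (n - 1 - j) * (1 - F x / F v) ^ j) :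
    ContinuousOn φ (Ioc 0 vbar) ∧ StrictMonoOn φ (Ioc 0 vbar) ∧
      Tendsto φ (nhdsWithin 0 (Ioi 0)) (nhds 0) := by
  set m := n - 1 with hm
  have hkm : k ≤ m := hkn
  have hφ' : ∀ v, φ v = v - ∫ x in (0:ℝ)..v, myS m k (F x / F v) := hφ
  have h0mem : (0:ℝ) ∈ Icc (0:ℝ) vbar := ⟨le_rfl, hvbar.le⟩
  have hFpos : ∀ v, v ∈ Ioc (0:ℝ) vbar → 0 < F v := by
    intro v hv
    have := hFmono h0mem ⟨hv.1.le, hv.2⟩ hv.1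
    rwa [hF0] at this
  have hFnonneg : ∀ x ∈ Icc (0:ℝ) vbar, 0 ≤ F x := by
    intro x hx
    rcases eq_or_lt_of_le hx.1 with h | h
    · rw [← h, hF0]
    · exact (hFpos x ⟨h, hx.2⟩).le
  have hFmono' := hFmono.monotoneOn
  have hmem : ∀ {v x : ℝ}, v ∈ Ioc 0 vbar → x ∈ Icc 0 v → F x / F v ∈ Icc (0:ℝ) 1 := by
    intro v x hv hx
    have hxv : x ∈ Icc (0:ℝ) vbar := ⟨hx.1, hx.2.trans hv.2⟩
    refine ⟨div_nonneg (hFnonneg x hxv) (hFpos v hv).le, ?_⟩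
    rw [div_le_one (hFpos v hv)]
    exact hFmono' hxv ⟨hv.1.le, hv.2⟩ hx.2
  have hcont_int : ∀ v ∈ Ioc (0:ℝ) vbar, ContinuousOn (fun x => myS m k (F x / F v)) (Icc 0 vbar) :=
    fun v hv => (myS_continuous m k).comp_continuousOn (hFcont.div_const _)
  have hII : ∀ v ∈ Ioc (0:ℝ) vbar, ∀ a b : ℝ, 0 ≤ a → a ≤ b → b ≤ vbar →
      IntervalIntegrable (fun x => myS m k (F x / F v)) MeasureTheory.volume a b := by
    intro v hv a b ha hab hb
    apply ContinuousOn.intervalIntegrable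
    apply (hcont_int v hv).mono
    rw [uIcc_of_le hab]
    exact Icc_subset_Icc ha hb
  -- pointwise bounds on φ
  have hbounds : ∀ v ∈ Ioc (0:ℝ) vbar, 0 ≤ φ v ∧ φ v ≤ v := by
    intro v hv
    have hIle : (∫ x in (0:ℝ)..v, myS m k (F x / F v)) ≤ ∫ x in (0:ℝ)..v, (1:ℝ) :=
      intervalIntegral.integral_mono_on hv.1.le (hII v hv 0 v le_rfl hv.1.le hv.2)
        intervalIntegrable_const
        (fun x hx => myS_le_one hkm (hmem hv hx).1 (hmem hv hx).2)
    have hI0 : 0 ≤ ∫ x in (0:ℝ)..v, myS m k (F x / F v) :=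
      intervalIntegral.integral_nonneg hv.1.le
        (fun x hx => myS_nonneg m k (hmem hv hx).1 (hmem hv hx).2)
    simp only [intervalIntegral.integral_const, smul_eq_mul, mul_one, sub_zero] at hIle
    rw [hφ' v]
    constructor <;> linarith
  refine ⟨?_, ?_, ?_⟩
  · -- continuity
    set Fe : ℝ → ℝ := fun x => F (max 0 (min x vbar)) with hFe
    have hproj : ∀ x : ℝ, max 0 (min x vbar) ∈ Icc (0:ℝ) vbar := fun x =>
      ⟨le_max_left _ _, max_le hvbar.le (min_le_right _ _)⟩
    have hFecont : Continuous Fe :=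
      hFcont.comp_continuous (continuous_const.max (continuous_id.min continuous_const)) hproj
    have hFeeq : ∀ x ∈ Icc (0:ℝ) vbar, Fe x = F x := by
      intro x hx
      rw [hFe]
      simp only [min_eq_left hx.2, max_eq_right hx.1]
    have hFepos : ∀ v : ℝ, 0 < v → 0 < Fe v := by
      intro v hv
      rcases le_or_gt v vbar with h | h
      · rw [hFeeq v ⟨hv.le, h⟩]; exact hFpos v ⟨hv, h⟩
      · rw [hFe]
        simp only [min_eq_right h.le, max_eq_right hvbar.le]
        exact hFpos vbar ⟨hvbar, le_rfl⟩
    have hψcont : ContinuousOn (fun v => ∫ x in (0:ℝ)..v, myS m k (Fe x / Fe v)) (Ioi (0:ℝ)) := by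
      rw [continuousOn_iff_continuous_restrict]
      have hf : Continuous (Function.uncurry fun (p : Ioi (0:ℝ)) (x : ℝ) => myS m k (Fe x / Fe ↑p)) := by
        apply (myS_continuous m k).comp
        exact (hFecont.comp continuous_snd).div
          (hFecont.comp (continuous_subtype_val.comp continuous_fst))
          (fun q => (hFepos _ q.1.2).ne')
      exact intervalIntegral.continuous_parametric_intervalIntegral_of_continuous hf
        continuous_subtype_val
    have heq : ∀ v ∈ Ioc (0:ℝ) vbar, (fun v => v - ∫ x in (0:ℝ)..v, myS m k (Fe x / Fe v)) v = φ v := by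
      intro v hv
      show v - (∫ x in (0:ℝ)..v, myS m k (Fe x / Fe v)) = φ v
      rw [hφ' v]
      congr 1
      apply intervalIntegral.integral_congr
      intro x hx
      rw [uIcc_of_le hv.1.le] at hx
      simp only [hFeeq x ⟨hx.1, hx.2.trans hv.2⟩, hFeeq v ⟨hv.1.le, hv.2⟩]
    exact ContinuousOn.congr (continuousOn_id.sub (hψcont.mono Ioc_subset_Ioi_self))
      (fun v hv => (heq v hv).symm)
  · -- strict monotonicity
    intro v hv w hw hvw
    have hIw1 : IntervalIntegrable (fun x => myS m k (F x / F w)) MeasureTheory.volume 0 v :=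
      hII w hw 0 v le_rfl hv.1.le hv.2
    have hIw2 : IntervalIntegrable (fun x => myS m k (F x / F w)) MeasureTheory.volume v w :=
      hII w hw v w hv.1.le hvw.le hw.2
    have hIv : IntervalIntegrable (fun x => myS m k (F x / F v)) MeasureTheory.volume 0 v :=
      hII v hv 0 v le_rfl hv.1.le hv.2
    have hsplit : (∫ x in (0:ℝ)..v, myS m k (F x / F w)) + (∫ x in v..w, myS m k (F x / F w))
        = ∫ x in (0:ℝ)..w, myS m k (F x / F w) :=
      intervalIntegral.integral_add_adjacent_intervals hIw1 hIw2
    have hA : (∫ x in (0:ℝ)..v, myS m k (F x / F w)) ≤ ∫ x in (0:ℝ)..v, myS m k (F x / F v) := by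
      apply intervalIntegral.integral_mono_on hv.1.le hIw1 hIv
      intro x hx
      have hxw : x ∈ Icc (0:ℝ) w := ⟨hx.1, hx.2.trans hvw.le⟩
      apply myS_monotoneOn m k hkm (hmem hw hxw) (hmem hv hx)
      apply div_le_div_of_nonneg_left (hFnonneg x ⟨hx.1, hx.2.trans hv.2⟩) (hFpos v hv)
      exact hFmono' ⟨hv.1.le, hv.2⟩ ⟨hv.1.le.trans hvw.le, hw.2⟩ hvw.le
    have hB : (∫ x in v..w, myS m k (F x / F w)) < w - v := by
      have hpos : (0:ℝ) < ∫ x in v..w, (1 - myS m k (F x / F w)) := by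
        apply intervalIntegral.intervalIntegral_pos_of_pos_on
          (intervalIntegrable_const.sub hIw2) _ hvw
        intro x hx
        have hxm : x ∈ Icc (0:ℝ) w := ⟨hv.1.le.trans hx.1.le, hx.2.le⟩
        have ht := hmem hw hxm
        have hlt : F x / F w < 1 := by
          rw [div_lt_one (hFpos w hw)]
          exact hFmono ⟨hxm.1, hxm.2.trans hw.2⟩ ⟨hw.1.le, hw.2⟩ hx.2
        have := myS_lt_one hkm ht.1 hlt
        linarith
      have heq2 : (∫ x in v..w, (1 - myS m k (F x / F w)))
          = (w - v) - ∫ x in v..w, myS m k (F x / F w) := by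
        rw [intervalIntegral.integral_sub intervalIntegrable_const hIw2,
          intervalIntegral.integral_const]
        simp
      rw [heq2] at hpos
      linarith
    rw [hφ' v, hφ' w]
    linarith
  · -- limit at 0+
    have hmem3 : Ioo (0:ℝ) vbar ∈ nhdsWithin (0:ℝ) (Ioi 0) :=
      Ioo_mem_nhdsGT_of_mem ⟨le_rfl, hvbar⟩
    apply tendsto_of_tendsto_of_tendsto_of_le_of_le' (g := fun _ => (0:ℝ)) (h := fun v => v)
      tendsto_const_nhds (tendsto_id.mono_left nhdsWithin_le_nhds)
    · filter_upwards [hmem3] with v hv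
      exact (hbounds v ⟨hv.1, hv.2.le⟩).1
    · filter_upwards [hmem3] with v hv
      exact (hbounds v ⟨hv.1, hv.2.le⟩).2
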